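/- For all a, b ∈ ℝ and c, d ∈ ℝ with c ≠ 0, c² ≠ d²: ∫_0^a ∫_0^b e^{c(τ+τ') - d|τ-τ'|} dτ dτ' = (1/(c²-d²)) · (1_{ab≥0} · (d·sign(a)/c)(1 - e^{2c·sign(a)(|a|∧|b|)}) + 1 - e^{ca - d|a|} - e^{cb - d|b|} + e^{c(a+b) - d|a-b|}). -/

import Mathlib

open Real intervalIntegral MeasureTheory


lemma int_exp_lin (k m x y : ℝ) (hk : k ≠ 0) :
    ∫ t in x..y, Real.exp (k * t + m) = (Real.exp (k * y + m) - Real.exp (k * x + m)) / k := by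
  have h : ∀ t ∈ Set.uIcc x y, HasDerivAt (fun t => Real.exp (k * t + m) / k)
      (Real.exp (k * t + m)) t := by
    intro t _
    have h1 : HasDerivAt (fun t => k * t + m) k t := by
      simpa using ((hasDerivAt_id t).const_mul k).add_const m
    have h2 := (h1.exp).div_const k
    have : Real.exp (k * t + m) * (k / k) = Real.exp (k * t + m) := by rw [div_self hk, mul_one]
    simpa [mul_div_assoc, this] using h2
  have := intervalIntegral.integral_eq_sub_of_hasDerivAt h
    (by apply Continuous.intervalIntegrable; continuity)
  rw [this]; ring
lemma int_comb (p q r s k1 k2 k3 k4 m1 m2 m3 m4 x y : ℝ)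
    (h1 : k1 ≠ 0) (h2 : k2 ≠ 0) (h3 : k3 ≠ 0) (h4 : k4 ≠ 0) :
    ∫ t in x..y, (p * Real.exp (k1 * t + m1) + q * Real.exp (k2 * t + m2)
        + r * Real.exp (k3 * t + m3) + s * Real.exp (k4 * t + m4))
      = p * ((Real.exp (k1 * y + m1) - Real.exp (k1 * x + m1)) / k1)
        + q * ((Real.exp (k2 * y + m2) - Real.exp (k2 * x + m2)) / k2)
        + r * ((Real.exp (k3 * y + m3) - Real.exp (k3 * x + m3)) / k3)
        + s * ((Real.exp (k4 * y + m4) - Real.exp (k4 * x + m4)) / k4) := by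
  have I : ∀ (u v : ℝ), IntervalIntegrable (fun t => u * Real.exp (v * t + m1)) MeasureTheory.volume x y := by
    intro u v; apply Continuous.intervalIntegrable; continuity
  have I1 : ∀ (u v w : ℝ), IntervalIntegrable (fun t => u * Real.exp (v * t + w)) MeasureTheory.volume x y := by
    intro u v w; apply Continuous.intervalIntegrable; continuity
  rw [intervalIntegral.integral_add (((I1 p k1 m1).add (I1 q k2 m2)).add (I1 r k3 m3)) (I1 s k4 m4),
    intervalIntegral.integral_add ((I1 p k1 m1).add (I1 q k2 m2)) (I1 r k3 m3),
    intervalIntegral.integral_add (I1 p k1 m1) (I1 q k2 m2),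
    intervalIntegral.integral_const_mul, intervalIntegral.integral_const_mul,
    intervalIntegral.integral_const_mul, intervalIntegral.integral_const_mul,
    int_exp_lin _ _ _ _ h1, int_exp_lin _ _ _ _ h2, int_exp_lin _ _ _ _ h3, int_exp_lin _ _ _ _ h4]

lemma cont_f (c d : ℝ) : Continuous (fun p : ℝ × ℝ => Real.exp (c * (p.1 + p.2) - d * |p.1 - p.2|)) := by
  fun_prop

lemma swap_lem (a b c d : ℝ) (ha : 0 ≤ a) (hb : 0 ≤ b) :
    (∫ τ' in (0:ℝ)..a, ∫ τ in (0:ℝ)..b, Real.exp (c * (τ + τ') - d * |τ - τ'|))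
      = ∫ τ' in (0:ℝ)..b, ∫ τ in (0:ℝ)..a, Real.exp (c * (τ + τ') - d * |τ - τ'|) := by
  have key : ∀ x y : ℝ, Real.exp (c * (y + x) - d * |y - x|)
      = Real.exp (c * (x + y) - d * |x - y|) := by
    intro x y; rw [abs_sub_comm, add_comm]
  simp only [intervalIntegral.integral_of_le ha, intervalIntegral.integral_of_le hb]
  have hint : Integrable (Function.uncurry fun x y => Real.exp (c * (y + x) - d * |y - x|))
      ((volume.restrict (Set.Ioc (0:ℝ) a)).prod (volume.restrict (Set.Ioc (0:ℝ) b))) := by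
    rw [Measure.prod_restrict]
    apply (ContinuousOn.integrableOn_compact (IsCompact.prod isCompact_Icc isCompact_Icc)
      ((cont_f c d).comp (continuous_swap)).continuousOn).mono_set
    exact Set.prod_mono Set.Ioc_subset_Icc_self Set.Ioc_subset_Icc_self
  have := MeasureTheory.integral_integral_swap hint
  rw [this]
  simp only [key]


lemma caseC (a b c d : ℝ) (h1 : c + d ≠ 0) (h2 : c - d ≠ 0)
    (ha : 0 ≤ a) (hb : b ≤ 0) :
    (∫ τ' in (0:ℝ)..a, ∫ τ in (0:ℝ)..b, Real.exp (c * (τ + τ') - d * |τ - τ'|))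
      = (1 / (c ^ 2 - d ^ 2)) * (1 - Real.exp (c * a - d * a)
          - Real.exp (c * b + d * b) + Real.exp (c * (a + b) - d * (a - b))) := by
  have inner : ∀ τ' ∈ Set.uIcc (0:ℝ) a,
      (∫ τ in (0:ℝ)..b, Real.exp (c * (τ + τ') - d * |τ - τ'|))
        = (1/(c+d)) * Real.exp ((c-d)*τ' + (c+d)*b) + (-(1/(c+d))) * Real.exp ((c-d)*τ' + 0) := by
    intro τ' hτ'
    rw [Set.uIcc_of_le ha] at hτ'
    have e1 : (∫ τ in (0:ℝ)..b, Real.exp (c * (τ + τ') - d * |τ - τ'|))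
        = ∫ τ in (0:ℝ)..b, Real.exp ((c+d) * τ + (c-d) * τ') := by
      apply intervalIntegral.integral_congr
      intro τ hτ
      rw [Set.uIcc_of_ge hb] at hτ
      show Real.exp (c * (τ + τ') - d * |τ - τ'|) = Real.exp ((c+d) * τ + (c-d) * τ')
      rw [abs_of_nonpos (by linarith [hτ.2, hτ'.1] : τ - τ' ≤ 0)]
      congr 1
      ring
    rw [e1, int_exp_lin _ _ _ _ h1]
    rw [show (c+d) * b + (c-d) * τ' = (c-d)*τ' + (c+d)*b by ring,
        show (c+d) * 0 + (c-d) * τ' = (c-d)*τ' + 0 by ring]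
    ring
  rw [intervalIntegral.integral_congr inner]
  have I1 : ∀ (u v w : ℝ), IntervalIntegrable (fun t => u * Real.exp (v * t + w))
      MeasureTheory.volume 0 a := by
    intro u v w; apply Continuous.intervalIntegrable; continuity
  rw [intervalIntegral.integral_add (I1 _ _ _) (I1 _ _ _),
    intervalIntegral.integral_const_mul, intervalIntegral.integral_const_mul,
    int_exp_lin _ _ _ _ h2, int_exp_lin _ _ _ _ h2]
  have hc2 : c ^ 2 - d ^ 2 ≠ 0 := by
    intro h; apply h1
    have : (c+d)*(c-d) = 0 := by nlinarith [h]
    rcases mul_eq_zero.1 this with h' | h'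
    · exact h'
    · exact absurd h' h2
  rw [show c * a - d * a = (c-d)*a + 0 by ring,
    show c * b + d * b = (c-d)*0 + (c+d)*b by ring,
    show c * (a+b) - d * (a-b) = (c-d)*a + (c+d)*b by ring,
    show (c-d)*0 + (0:ℝ) = 0 by ring, Real.exp_zero]
  field_simp
  ring

lemma caseD (a b c d : ℝ) (h1 : c + d ≠ 0) (h2 : c - d ≠ 0)
    (ha : a ≤ 0) (hb : 0 ≤ b) :
    (∫ τ' in (0:ℝ)..a, ∫ τ in (0:ℝ)..b, Real.exp (c * (τ + τ') - d * |τ - τ'|))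
      = (1 / (c ^ 2 - d ^ 2)) * (1 - Real.exp (c * a + d * a)
          - Real.exp (c * b - d * b) + Real.exp (c * (a + b) - d * (b - a))) := by
  have inner : ∀ τ' ∈ Set.uIcc (0:ℝ) a,
      (∫ τ in (0:ℝ)..b, Real.exp (c * (τ + τ') - d * |τ - τ'|))
        = (1/(c-d)) * Real.exp ((c+d)*τ' + (c-d)*b) + (-(1/(c-d))) * Real.exp ((c+d)*τ' + 0) := by
    intro τ' hτ'
    rw [Set.uIcc_of_ge ha] at hτ'
    have e1 : (∫ τ in (0:ℝ)..b, Real.exp (c * (τ + τ') - d * |τ - τ'|))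
        = ∫ τ in (0:ℝ)..b, Real.exp ((c-d) * τ + (c+d) * τ') := by
      apply intervalIntegral.integral_congr
      intro τ hτ
      rw [Set.uIcc_of_le hb] at hτ
      show Real.exp (c * (τ + τ') - d * |τ - τ'|) = Real.exp ((c-d) * τ + (c+d) * τ')
      rw [abs_of_nonneg (by linarith [hτ.1, hτ'.2] : (0:ℝ) ≤ τ - τ')]
      congr 1
      ring
    rw [e1, int_exp_lin _ _ _ _ h2]
    rw [show (c-d) * b + (c+d) * τ' = (c+d)*τ' + (c-d)*b by ring,
        show (c-d) * 0 + (c+d) * τ' = (c+d)*τ' + 0 by ring]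
    ring
  rw [intervalIntegral.integral_congr inner]
  have I1 : ∀ (u v w : ℝ), IntervalIntegrable (fun t => u * Real.exp (v * t + w))
      MeasureTheory.volume 0 a := by
    intro u v w; apply Continuous.intervalIntegrable; continuity
  rw [intervalIntegral.integral_add (I1 _ _ _) (I1 _ _ _),
    intervalIntegral.integral_const_mul, intervalIntegral.integral_const_mul,
    int_exp_lin _ _ _ _ h1, int_exp_lin _ _ _ _ h1]
  have hc2 : c ^ 2 - d ^ 2 ≠ 0 := by
    intro h; apply h1
    have : (c+d)*(c-d) = 0 := by nlinarith [h]
    rcases mul_eq_zero.1 this with h' | h'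
    · exact h'
    · exact absurd h' h2
  rw [show c * a + d * a = (c+d)*a + 0 by ring,
    show c * b - d * b = (c+d)*0 + (c-d)*b by ring,
    show c * (a+b) - d * (b-a) = (c+d)*a + (c-d)*b by ring,
    show (c+d)*0 + (0:ℝ) = 0 by ring, Real.exp_zero]
  field_simp
  ring

lemma negflip (s : ℝ) (g : ℝ → ℝ) : (∫ x in (0:ℝ)..s, g x) = -∫ x in (0:ℝ)..(-s), g (-x) := by
  rw [intervalIntegral.integral_comp_neg, neg_neg, neg_zero, intervalIntegral.integral_symm]

lemma neg_lem (a b c d : ℝ) :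
    (∫ τ' in (0:ℝ)..a, ∫ τ in (0:ℝ)..b, Real.exp (c * (τ + τ') - d * |τ - τ'|))
      = ∫ τ' in (0:ℝ)..(-a), ∫ τ in (0:ℝ)..(-b), Real.exp ((-c) * (τ + τ') - d * |τ - τ'|) := by
  rw [negflip a]
  have h : ∀ τ' : ℝ, (∫ τ in (0:ℝ)..b, Real.exp (c * (τ + -τ') - d * |τ - -τ'|))
      = -∫ τ in (0:ℝ)..(-b), Real.exp ((-c) * (τ + τ') - d * |τ - τ'|) := by
    intro τ'
    rw [negflip b fun τ => Real.exp (c * (τ + -τ') - d * |τ - -τ'|)]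
    congr 1
    apply intervalIntegral.integral_congr
    intro τ _
    show Real.exp (c * (-τ + -τ') - d * |-τ - -τ'|) = Real.exp ((-c) * (τ + τ') - d * |τ - τ'|)
    rw [show -τ - -τ' = -(τ - τ') by ring, abs_neg]
    congr 1
    ring
  simp only [h, intervalIntegral.integral_neg, neg_neg]


lemma caseB (a b c d : ℝ) (hc : c ≠ 0) (h1 : c + d ≠ 0) (h2 : c - d ≠ 0)
    (ha : 0 ≤ a) (hab : a ≤ b) :
    (∫ τ' in (0:ℝ)..a, ∫ τ in (0:ℝ)..b, Real.exp (c * (τ + τ') - d * |τ - τ'|))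
      = (1 / (c ^ 2 - d ^ 2)) * ((d / c) * (1 - Real.exp (2 * c * a))
          + 1 - Real.exp (c * a - d * a) - Real.exp (c * b - d * b)
          + Real.exp (c * (a + b) - d * (b - a))) := by
  have hcont : ∀ τ' : ℝ, Continuous (fun τ => Real.exp (c * (τ + τ') - d * |τ - τ'|)) := by
    intro τ'; fun_prop
  have inner : ∀ τ' ∈ Set.uIcc (0:ℝ) a,
      (∫ τ in (0:ℝ)..b, Real.exp (c * (τ + τ') - d * |τ - τ'|))
        = (1/(c+d)) * Real.exp (2*c*τ' + 0) + (-(1/(c+d))) * Real.exp ((c-d)*τ' + 0)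
          + (1/(c-d)) * Real.exp ((c+d)*τ' + (c-d)*b) + (-(1/(c-d))) * Real.exp (2*c*τ' + 0) := by
    intro τ' hτ'
    rw [Set.uIcc_of_le ha] at hτ'
    obtain ⟨h0, hA⟩ := hτ'
    have hτ'b : τ' ≤ b := hA.trans hab
    rw [← intervalIntegral.integral_add_adjacent_intervals (a := (0:ℝ)) (b := τ') (c := b)
      ((hcont τ').intervalIntegrable _ _) ((hcont τ').intervalIntegrable _ _)]
    have e1 : (∫ τ in (0:ℝ)..τ', Real.exp (c * (τ + τ') - d * |τ - τ'|))
        = ∫ τ in (0:ℝ)..τ', Real.exp ((c+d) * τ + (c-d) * τ') := by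
      apply intervalIntegral.integral_congr
      intro τ hτ
      rw [Set.uIcc_of_le h0] at hτ
      show Real.exp (c * (τ + τ') - d * |τ - τ'|) = Real.exp ((c+d) * τ + (c-d) * τ')
      rw [abs_of_nonpos (by linarith [hτ.2] : τ - τ' ≤ 0)]
      congr 1
      ring
    have e2 : (∫ τ in τ'..b, Real.exp (c * (τ + τ') - d * |τ - τ'|))
        = ∫ τ in τ'..b, Real.exp ((c-d) * τ + (c+d) * τ') := by
      apply intervalIntegral.integral_congr
      intro τ hτ
      rw [Set.uIcc_of_le hτ'b] at hτ
      show Real.exp (c * (τ + τ') - d * |τ - τ'|) = Real.exp ((c-d) * τ + (c+d) * τ')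
      rw [abs_of_nonneg (by linarith [hτ.1] : (0:ℝ) ≤ τ - τ')]
      congr 1
      ring
    rw [e1, e2, int_exp_lin _ _ _ _ h1, int_exp_lin _ _ _ _ h2]
    rw [show (c+d) * τ' + (c-d) * τ' = 2*c*τ' + 0 by ring,
        show (c+d) * 0 + (c-d) * τ' = (c-d)*τ' + 0 by ring,
        show (c-d) * τ' + (c+d) * τ' = 2*c*τ' + 0 by ring]
    ring
  rw [intervalIntegral.integral_congr inner,
    int_comb _ _ _ _ _ _ _ _ _ _ _ _ _ _ (by intro h; apply hc; linarith : (2:ℝ)*c ≠ 0) h2 h1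
      (by intro h; apply hc; linarith : (2:ℝ)*c ≠ 0)]
  have E0 : Real.exp (2*c*0 + 0) = 1 := by norm_num
  have E1 : Real.exp ((c-d)*0 + 0) = 1 := by norm_num
  have E2 : Real.exp ((c+d)*0 + (c-d)*b) = Real.exp ((c-d)*b) := by norm_num
  rw [E0, E1, E2,
    show c * a - d * a = (c-d)*a + 0 by ring,
    show c * b - d * b = (c-d)*b by ring,
    show c * (a+b) - d * (b-a) = (c+d)*a + (c-d)*b by ring,
    show (2:ℝ)*c*a = 2*c*a + 0 by ring]
  have hc2 : c ^ 2 - d ^ 2 ≠ 0 := by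
    intro h; apply h1
    have : (c+d)*(c-d) = 0 := by nlinarith [h]
    rcases mul_eq_zero.1 this with h' | h'
    · exact h'
    · exact absurd h' h2
  field_simp
  ring


theorem stmt_14 (a b c d : ℝ) (hc : c ≠ 0) (hcd : c ^ 2 ≠ d ^ 2) :
    (∫ τ' in (0 : ℝ)..a, ∫ τ in (0 : ℝ)..b, Real.exp (c * (τ + τ') - d * |τ - τ'|))
      = (1 / (c ^ 2 - d ^ 2)) *
        ((if 0 ≤ a * b then
            (d * Real.sign a / c) * (1 - Real.exp (2 * c * Real.sign a * min |a| |b|))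
          else 0)
          + 1 - Real.exp (c * a - d * |a|) - Real.exp (c * b - d * |b|)
          + Real.exp (c * (a + b) - d * |a - b|)) := by
  have h1 : c + d ≠ 0 := fun h => hcd (by rw [show d = -c by linarith]; ring)
  have h2 : c - d ≠ 0 := fun h => hcd (by rw [show d = c by linarith])
  by_cases ha0 : a = 0
  · subst ha0
    simp [Real.sign_zero, zero_sub, abs_neg]
  by_cases hb0 : b = 0
  · subst hb0
    simp [Real.sign_zero]
  rcases lt_or_gt_of_ne ha0 with haneg | hapos
  · rcases lt_or_gt_of_ne hb0 with hbneg | hbpos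
    · -- a < 0, b < 0
      have hab : 0 ≤ a * b := le_of_lt (mul_pos_of_neg_of_neg haneg hbneg)
      rw [if_pos hab, Real.sign_of_neg haneg, abs_of_neg haneg, abs_of_neg hbneg, neg_lem]
      have h1' : -c + d ≠ 0 := fun h => h2 (by linarith)
      have h2' : -c - d ≠ 0 := fun h => h1 (by linarith)
      rcases le_total b a with h | h
      · rw [caseB (-a) (-b) (-c) d (neg_ne_zero.2 hc) h1' h2' (by linarith) (by linarith),
          min_eq_left (by linarith : -a ≤ -b), abs_of_nonneg (by linarith : (0:ℝ) ≤ a - b)]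
        ring_nf
      · rw [swap_lem _ _ _ _ (by linarith) (by linarith),
          caseB (-b) (-a) (-c) d (neg_ne_zero.2 hc) h1' h2' (by linarith) (by linarith),
          min_eq_right (by linarith : -b ≤ -a), abs_of_nonpos (by linarith : a - b ≤ 0)]
        ring_nf
    · -- a < 0 < b
      have hab : ¬ (0 ≤ a * b) := not_le.2 (mul_neg_of_neg_of_pos haneg hbpos)
      rw [if_neg hab, caseD a b c d h1 h2 (le_of_lt haneg) (le_of_lt hbpos),
        abs_of_neg haneg, abs_of_pos hbpos, abs_of_nonpos (by linarith : a - b ≤ 0)]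
      ring_nf
  · rcases lt_or_gt_of_ne hb0 with hbneg | hbpos
    · -- b < 0 < a
      have hab : ¬ (0 ≤ a * b) := not_le.2 (mul_neg_of_pos_of_neg hapos hbneg)
      rw [if_neg hab, caseC a b c d h1 h2 (le_of_lt hapos) (le_of_lt hbneg),
        abs_of_pos hapos, abs_of_neg hbneg, abs_of_nonneg (by linarith : (0:ℝ) ≤ a - b)]
      ring_nf
    · -- 0 < a, 0 < b
      have hab : 0 ≤ a * b := le_of_lt (mul_pos hapos hbpos)
      rw [if_pos hab, Real.sign_of_pos hapos, abs_of_pos hapos, abs_of_pos hbpos]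
      rcases le_total a b with h | h
      · rw [caseB a b c d hc h1 h2 (le_of_lt hapos) h,
          min_eq_left h, abs_of_nonpos (by linarith : a - b ≤ 0)]
        ring_nf
      · rw [swap_lem _ _ _ _ (le_of_lt hapos) (le_of_lt hbpos),
          caseB b a c d hc h1 h2 (le_of_lt hbpos) h,
          min_eq_right h, abs_of_nonneg (by linarith : (0:ℝ) ≤ a - b)]
        ring_nf
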